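/- Let Ω be a bounded plane domain, K ⊂ Ω compact, N a positive integer, and f_k, g_k holomorphic on Ω for k = 1,…,N. Then there exist 0 < r < 1 and C > 0 such that for every pair of positive integers (d,e) with d+e > N, there is a unit polynomial F of bidegree (d,e) with sup_K |F(f_k(ζ), g_k(ζ))| ≤ C^{d+e} r^{de/N} for every k = 1,…,N. -/

import Mathlib

set_option maxHeartbeats 1000000

open Metric Finset

lemma coeff_bound {h : ℂ → ℂ} {c : ℂ} {R M : ℝ} (hR : 0 < R)
    (hM : ∀ z ∈ Metric.sphere c R, ‖h z‖ ≤ M) (n : ℕ) :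
    ‖cauchyPowerSeries h c R n fun _ => 1‖ ≤ M / R ^ n := by
  rw [cauchyPowerSeries_apply]
  have key := circleIntegral.norm_two_pi_i_inv_smul_integral_le_of_norm_le_const
    (f := fun z => ((1:ℂ) / (z - c)) ^ n • (z - c)⁻¹ • h z) (c := c) (R := R)
    (C := (R⁻¹) ^ n * (R⁻¹ * M)) hR.le ?_
  · refine key.trans (le_of_eq ?_)
    field_simp
    rw [mul_right_comm, ← mul_pow, one_div, inv_mul_cancel₀ hR.ne', one_pow, one_mul]
  · intro z hz
    have hz' : ‖z - c‖ = R := by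
      rwa [← dist_eq_norm, ← Metric.mem_sphere]
    have hzc : z - c ≠ 0 := by
      intro h0
      rw [h0, norm_zero] at hz'
      exact hR.ne' hz'.symm
    rw [norm_smul, norm_smul, norm_pow, norm_div, norm_one, norm_inv, hz']
    have h1 : (1 / R) ^ n = R⁻¹ ^ n := by rw [one_div]
    rw [h1]
    have := hM z hz
    have hMn : (0:ℝ) ≤ R⁻¹ ^ n * R⁻¹ := by positivity
    calc R⁻¹ ^ n * (R⁻¹ * ‖h z‖) ≤ R⁻¹ ^ n * (R⁻¹ * M) := by gcongr


lemma tail_bound {h : ℂ → ℂ} {c : ℂ} {R : NNReal} (hR : 0 < R) {M : ℝ}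
    (hd : DifferentiableOn ℂ h (Metric.closedBall c R))
    (hM : ∀ z ∈ Metric.closedBall c (R : ℝ), ‖h z‖ ≤ M)
    {s : ℕ} (hvan : ∀ i < s, (cauchyPowerSeries h c R i fun _ => 1) = 0)
    {ζ : ℂ} (hζ : ‖ζ - c‖ ≤ R / 2) :
    ‖h ζ‖ ≤ 2 * M * (1 / 2 : ℝ) ^ s := by
  have hRR : (0:ℝ) < R := hR
  have hM0 : 0 ≤ M := le_trans (norm_nonneg _) (hM c (Metric.mem_closedBall_self hRR.le))
  have H := hd.hasFPowerSeriesOnBall hR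
  set P := cauchyPowerSeries h c (R:ℝ) with hP
  set y := ζ - c with hy
  have hylt : ‖y‖ < (R:ℝ) := lt_of_le_of_lt hζ (by linarith)
  have hymem : y ∈ Metric.eball (0:ℂ) R := by
    rw [Metric.mem_eball, edist_zero_right]
    exact_mod_cast hylt
  have hsum := H.hasSum hymem
  rw [add_sub_cancel] at hsum
  have hterm : ∀ n, (P n fun _ => y) = y ^ n * (P n fun _ => 1) := by
    intro n
    have h1 : (fun _ : Fin n => y) = fun i : Fin n => y • (1:ℂ) := by
      funext i; simp
    rw [h1, (P n).map_smul_univ (fun _ => y) (fun _ => 1)]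
    simp
  have hcoef : ∀ n, ‖P n fun _ => 1‖ ≤ M / (R:ℝ) ^ n :=
    coeff_bound hRR (fun z hz => hM z (Metric.sphere_subset_closedBall hz))
  have htb : ∀ n, ‖P n fun _ => y‖ ≤ M * (1/2:ℝ) ^ n := by
    intro n
    rw [hterm n, norm_mul, norm_pow]
    calc ‖y‖ ^ n * ‖P n fun _ => 1‖ ≤ ((R:ℝ)/2) ^ n * (M / (R:ℝ) ^ n) :=
          mul_le_mul (pow_le_pow_left₀ (norm_nonneg _) hζ n) (hcoef n)
            (norm_nonneg _) (by positivity)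
      _ = M * (1/2:ℝ) ^ n := by
          rw [div_pow, div_pow]
          field_simp
          ring
  have hsumm : Summable (fun n => ‖P n fun _ => y‖) :=
    Summable.of_nonneg_of_le (fun _ => norm_nonneg _) htb
      ((summable_geometric_of_lt_one (by norm_num) (by norm_num)).mul_left M)
  have h1 : ‖h ζ‖ ≤ ∑' n, ‖P n fun _ => y‖ := by
    rw [← hsum.tsum_eq]
    exact norm_tsum_le_tsum_norm hsumm
  have hzero : ∀ i < s, ‖P i fun _ => y‖ = 0 := by
    intro i hi
    rw [hterm i, hvan i hi, mul_zero, norm_zero]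
  have hsplit := Summable.sum_add_tsum_nat_add s hsumm
  have hfirst : ∑ i ∈ Finset.range s, ‖P i fun _ => y‖ = 0 :=
    Finset.sum_eq_zero fun i hi => hzero i (Finset.mem_range.1 hi)
  have hgeom : Summable (fun n : ℕ => M * (1/2:ℝ) ^ (n + s)) := by
    have : (fun n : ℕ => M * (1/2:ℝ) ^ (n + s)) =
        fun n : ℕ => (M * (1/2:ℝ) ^ s) * (1/2:ℝ) ^ n := by
      funext n; rw [pow_add]; ring
    rw [this]
    exact (summable_geometric_of_lt_one (by norm_num) (by norm_num)).mul_left _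
  have h2 : ∑' n : ℕ, ‖P (n + s) fun _ => y‖ ≤ ∑' n : ℕ, M * (1/2:ℝ) ^ (n + s) :=
    Summable.tsum_le_tsum (fun n => htb (n + s)) ((summable_nat_add_iff s).2 hsumm) hgeom
  have h3 : ∑' n : ℕ, M * (1/2:ℝ) ^ (n + s) = 2 * M * (1/2:ℝ) ^ s := by
    have : (fun n : ℕ => M * (1/2:ℝ) ^ (n + s)) =
        fun n : ℕ => (M * (1/2:ℝ) ^ s) * (1/2:ℝ) ^ n := by
      funext n; rw [pow_add]; ring
    rw [this, tsum_mul_left, tsum_geometric_of_lt_one (by norm_num) (by norm_num)]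
    norm_num
    ring
  calc ‖h ζ‖ ≤ ∑' n, ‖P n fun _ => y‖ := h1
    _ = ∑ i ∈ Finset.range s, ‖P i fun _ => y‖ + ∑' n : ℕ, ‖P (n + s) fun _ => y‖ :=
        hsplit.symm
    _ = ∑' n : ℕ, ‖P (n + s) fun _ => y‖ := by rw [hfirst, zero_add]
    _ ≤ ∑' n : ℕ, M * (1/2:ℝ) ^ (n + s) := h2
    _ = 2 * M * (1/2:ℝ) ^ s := h3

lemma cauchy_coeff_sum {ι : Type*} (S : Finset ι) (b : ι → ℂ) (v : ι → ℂ → ℂ)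
    (c : ℂ) {R : ℝ} (hR : 0 < R)
    (hv : ∀ i ∈ S, ContinuousOn (v i) (Metric.sphere c R)) (n : ℕ) :
    (cauchyPowerSeries (fun z => ∑ i ∈ S, b i * v i z) c R n fun _ => 1)
      = ∑ i ∈ S, b i * (cauchyPowerSeries (v i) c R n fun _ => 1) := by
  have hsub : ∀ z ∈ Metric.sphere c R, z - c ≠ 0 := by
    intro z hz h0
    have : dist z c = R := Metric.mem_sphere.1 hz
    rw [dist_eq_norm, h0, norm_zero] at this
    exact hR.ne this
  have h1 : ContinuousOn (fun z => z - c) (Metric.sphere c R) :=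
    (continuous_id.sub continuous_const).continuousOn
  have h2 : ContinuousOn (fun z => (z - c)⁻¹) (Metric.sphere c R) := h1.inv₀ hsub
  have hcore : ∀ i ∈ S, ContinuousOn
      (fun z => ((z - c)⁻¹) ^ n • (z - c)⁻¹ • v i z) (Metric.sphere c R) :=
    fun i hi => (h2.pow n).smul (h2.smul (hv i hi))
  have hint : ∀ i ∈ S, CircleIntegrable
      (fun z => b i • (((z - c)⁻¹) ^ n • (z - c)⁻¹ • v i z)) c R :=
    fun i hi => (continuousOn_const.fun_smul (hcore i hi)).circleIntegrable hR.le
  have key : (∮ z in C(c, R), ∑ i ∈ S, b i • (((z - c)⁻¹) ^ n • (z - c)⁻¹ • v i z))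
      = ∑ i ∈ S, b i • ∮ z in C(c, R), ((z - c)⁻¹) ^ n • (z - c)⁻¹ • v i z := by
    rw [circleIntegral]
    simp only [smul_sum]
    rw [intervalIntegral.integral_finset_sum
      (fun i hi => (circleIntegrable_iff R).1 (hint i hi))]
    refine Finset.sum_congr rfl fun i hi => ?_
    rw [← circleIntegral.integral_smul (b i), circleIntegral]
  simp only [cauchyPowerSeries_apply]
  have hfun : (fun z => ((1:ℂ) / (z - c)) ^ n • (z - c)⁻¹ • ∑ i ∈ S, b i * v i z)
      = fun z => ∑ i ∈ S, b i • (((z - c)⁻¹) ^ n • (z - c)⁻¹ • v i z) := by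
    funext z
    simp only [smul_eq_mul, Finset.mul_sum, one_div]
    refine Finset.sum_congr rfl fun i hi => ?_
    ring
  rw [hfun, key, Finset.smul_sum]
  refine Finset.sum_congr rfl fun i hi => ?_
  simp only [smul_eq_mul, one_div]
  ring

lemma exists_ne_zero_map_eq_zero {ι κ : Type*} [Fintype ι] [Fintype κ]
    (hcard : Fintype.card κ < Fintype.card ι) (A : κ → ι → ℂ) :
    ∃ b : ι → ℂ, b ≠ 0 ∧ ∀ j, ∑ i, b i * A j i = 0 := by
  let φ : (ι → ℂ) →ₗ[ℂ] (κ → ℂ) :=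
    { toFun := fun b j => ∑ i, b i * A j i
      map_add' := by
        intro x y; funext j; simp [add_mul, Finset.sum_add_distrib]
      map_smul' := by
        intro a x; funext j; simp [Finset.mul_sum, mul_assoc] }
  have hni : ¬ Function.Injective φ := by
    intro hinj
    have := LinearMap.finrank_le_finrank_of_injective hinj
    rw [Module.finrank_pi, Module.finrank_pi] at this
    omega
  rw [Function.not_injective_iff] at hni
  obtain ⟨x, y, hxy, hne⟩ := hni
  refine ⟨x - y, sub_ne_zero.2 hne, fun j => ?_⟩
  have : φ (x - y) = 0 := by rw [map_sub, hxy, sub_self]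
  have := congrFun this j
  simpa [φ, sub_mul, Finset.sum_sub_distrib] using this

lemma mv_package (d e : ℕ) (cc : Fin (d+1) × Fin (e+1) → ℂ) :
    ∃ F : MvPolynomial (Fin 2) ℂ,
      (∀ x : Fin (d+1) × Fin (e+1),
        F.coeff (Finsupp.single 0 (x.1:ℕ) + Finsupp.single 1 (x.2:ℕ)) = cc x) ∧
      (∀ v : Fin 2 →₀ ℕ, F.coeff v = 0 ∨
        ∃ x : Fin (d+1) × Fin (e+1),
          v = Finsupp.single 0 (x.1:ℕ) + Finsupp.single 1 (x.2:ℕ)) ∧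
      (∀ m ∈ F.support, m 0 ≤ d ∧ m 1 ≤ e) ∧
      ∀ X Y : ℂ, MvPolynomial.eval ![X, Y] F
        = ∑ x : Fin (d+1) × Fin (e+1), cc x * (X ^ (x.1:ℕ) * Y ^ (x.2:ℕ)) := by
  set u : Fin (d+1) × Fin (e+1) → (Fin 2 →₀ ℕ) :=
    fun x => Finsupp.single 0 (x.1:ℕ) + Finsupp.single 1 (x.2:ℕ) with hu
  have hu0 : ∀ x, (u x) 0 = (x.1:ℕ) := by
    intro x
    simp [hu, Finsupp.single_apply]
  have hu1 : ∀ x, (u x) 1 = (x.2:ℕ) := by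
    intro x
    simp [hu, Finsupp.single_apply]
  have huinj : Function.Injective u := by
    intro x y hxy
    have h0 : (x.1:ℕ) = (y.1:ℕ) := by rw [← hu0 x, ← hu0 y, hxy]
    have h1 : (x.2:ℕ) = (y.2:ℕ) := by rw [← hu1 x, ← hu1 y, hxy]
    exact Prod.ext (Fin.val_injective h0) (Fin.val_injective h1)
  refine ⟨∑ x : Fin (d+1) × Fin (e+1), MvPolynomial.monomial (u x) (cc x), ?_, ?_, ?_, ?_⟩
  · intro x
    rw [MvPolynomial.coeff_sum]
    simp only [MvPolynomial.coeff_monomial]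
    have : ∀ y : Fin (d+1) × Fin (e+1), (u y = u x) = (y = x) :=
      fun y => propext ⟨fun h => huinj h, fun h => congrArg u h⟩
    change ∑ y : Fin (d+1) × Fin (e+1), (if u y = u x then cc y else 0) = cc x
    simp only [this]
    simp
  · intro v
    by_cases hv : ∃ x, v = u x
    · exact Or.inr hv
    · left
      rw [MvPolynomial.coeff_sum]
      refine Finset.sum_eq_zero fun x _ => ?_
      rw [MvPolynomial.coeff_monomial, if_neg]
      intro h
      exact hv ⟨x, h.symm⟩
  · intro m hm
    have hne : MvPolynomial.coeff m (∑ x : Fin (d+1) × Fin (e+1),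
        MvPolynomial.monomial (u x) (cc x)) ≠ 0 := MvPolynomial.mem_support_iff.1 hm
    rw [MvPolynomial.coeff_sum] at hne
    obtain ⟨x, -, hx⟩ := Finset.exists_ne_zero_of_sum_ne_zero hne
    rw [MvPolynomial.coeff_monomial] at hx
    have : u x = m := by
      by_contra h
      rw [if_neg h] at hx
      exact hx rfl
    rw [← this, hu0, hu1]
    exact ⟨Fin.is_le _, Fin.is_le _⟩
  · intro X Y
    rw [map_sum]
    refine Finset.sum_congr rfl fun x _ => ?_
    rw [MvPolynomial.eval_monomial]
    congr 1
    rw [hu]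
    rw [Finsupp.prod_add_index (by intros; simp) (by intros; exact pow_add _ _ _)]
    rw [Finsupp.prod_single_index (by simp), Finsupp.prod_single_index (by simp)]
    simp

/-- Version of Bishop's lemma for N pairs of holomorphic functions. -/
theorem stmt_13 (Ω : Set ℂ) (hΩ : IsOpen Ω) (hconn : IsConnected Ω)
    (hbdd : Bornology.IsBounded Ω)
    (K : Set ℂ) (hK : IsCompact K) (hKΩ : K ⊆ Ω)
    (N : ℕ) (hN : 0 < N)
    (f g : Fin N → ℂ → ℂ)
    (hf : ∀ k, DifferentiableOn ℂ (f k) Ω) (hg : ∀ k, DifferentiableOn ℂ (g k) Ω) :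
    ∃ r C : ℝ, 0 < r ∧ r < 1 ∧ 0 < C ∧ ∀ d e : ℕ, 0 < d → 0 < e → N < d + e →
      ∃ F : MvPolynomial (Fin 2) ℂ,
        ((∀ m, ‖F.coeff m‖ ≤ 1) ∧ ∃ m, ‖F.coeff m‖ = 1) ∧
        (∀ m ∈ F.support, m 0 ≤ d ∧ m 1 ≤ e) ∧
        ∀ k, ∀ ζ ∈ K, ‖MvPolynomial.eval ![f k ζ, g k ζ] F‖ ≤
          C ^ (d + e) * r ^ ((d * e : ℝ) / N) := by
  rcases K.eq_empty_or_nonempty with hKe | hKne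
  · refine ⟨1/2, 1, by norm_num, by norm_num, by norm_num, ?_⟩
    intro d e _ _ _
    refine ⟨1, ⟨?_, ⟨0, ?_⟩⟩, ?_, ?_⟩
    · intro m
      rw [MvPolynomial.coeff_one]
      split <;> simp
    · rw [MvPolynomial.coeff_one, if_pos rfl]
      simp
    · intro m hm
      have := MvPolynomial.mem_support_iff.1 hm
      rw [MvPolynomial.coeff_one] at this
      have hm0 : (0 : Fin 2 →₀ ℕ) = m := by
        by_contra h
        rw [if_neg h] at this
        exact this rfl
      constructor <;> simp [← hm0]
    · intro k ζ hζ
      rw [hKe] at hζ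
      exact absurd hζ (Set.notMem_empty ζ)
  obtain ⟨z₀, hz₀⟩ := hKne
  obtain ⟨δ, hδpos, hδΩ⟩ := hK.exists_cthickening_subset_open hΩ hKΩ
  set L := Metric.cthickening δ K with hL
  have hLco : IsCompact L := hK.cthickening
  have hbnds : ∀ k : Fin N, ∃ Ck : ℝ, ∀ ζ ∈ L, ‖f k ζ‖ ≤ Ck ∧ ‖g k ζ‖ ≤ Ck := by
    intro k
    obtain ⟨C1, hC1⟩ := hLco.exists_bound_of_continuousOn ((hf k).continuousOn.mono hδΩ)
    obtain ⟨C2, hC2⟩ := hLco.exists_bound_of_continuousOn ((hg k).continuousOn.mono hδΩ)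
    exact ⟨max C1 C2, fun ζ hζ => ⟨(hC1 ζ hζ).trans (le_max_left _ _),
      (hC2 ζ hζ).trans (le_max_right _ _)⟩⟩
  choose B hB using hbnds
  set A : ℝ := 1 + ∑ k, |B k| with hA
  have hA1 : 1 ≤ A :=
    le_add_of_nonneg_right (Finset.sum_nonneg fun _ _ => abs_nonneg _)
  have hA0 : (0:ℝ) < A := lt_of_lt_of_le one_pos hA1
  have hAb : ∀ k, ∀ ζ ∈ L, ‖f k ζ‖ ≤ A ∧ ‖g k ζ‖ ≤ A := by
    intro k ζ hζ
    have h1 : B k ≤ A := by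
      have h2 : |B k| ≤ ∑ k, |B k| :=
        Finset.single_le_sum (f := fun k => |B k|) (fun _ _ => abs_nonneg _)
          (Finset.mem_univ k)
      have h3 : B k ≤ |B k| := le_abs_self _
      rw [hA]; linarith
    exact ⟨((hB k ζ hζ).1).trans h1, ((hB k ζ hζ).2).trans h1⟩
  obtain ⟨t, htK, hcov⟩ := hK.elim_nhds_subcover (fun z => Metric.ball z (δ/2))
    (fun x _ => Metric.ball_mem_nhds x (by positivity))
  set p := t.card with hp
  have hp0 : 0 < p := by
    rcases Finset.eq_empty_or_nonempty t with rfl | hne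
    · exfalso
      have := hcov hz₀
      simpa using this
    · exact Finset.card_pos.2 hne
  set rr : ℝ := (1/2 : ℝ) ^ ((p:ℝ)⁻¹) with hrr
  refine ⟨rr, 8 * A, Real.rpow_pos_of_pos (by norm_num) _,
    Real.rpow_lt_one (by norm_num) (by norm_num) (by positivity), by linarith, ?_⟩
  intro d e hd he hde
  set s := d * e / (N * p) with hs
  have hNp : 0 < N * p := Nat.mul_pos hN hp0
  have hcard : Fintype.card (Fin N × {x // x ∈ t} × Fin s) <
      Fintype.card (Fin (d+1) × Fin (e+1)) := by
    simp only [Fintype.card_prod, Fintype.card_coe, Fintype.card_fin]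
    have h1 : N * (p * s) ≤ d * e := by
      rw [← mul_assoc]
      exact (Nat.div_mul_le_self (d * e) (N * p)).trans_eq' (by rw [hs]; ring)
    have h2 : d * e < (d+1) * (e+1) := by nlinarith
    rw [← hp]
    exact lt_of_le_of_lt h1 h2
  obtain ⟨b, hb0, hbker⟩ := exists_ne_zero_map_eq_zero hcard
    (fun q x => cauchyPowerSeries
      (fun ζ => f q.1 ζ ^ (x.1:ℕ) * g q.1 ζ ^ (x.2:ℕ))
      (q.2.1 : ℂ) δ (q.2.2 : ℕ) (fun _ => 1))
  obtain ⟨x₀, -, hx₀⟩ := Finset.exists_max_image Finset.univ (fun x => ‖b x‖)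
    Finset.univ_nonempty
  have hβ : b x₀ ≠ 0 := by
    intro h
    apply hb0
    funext x
    have := hx₀ x (Finset.mem_univ x)
    rw [h, norm_zero] at this
    exact norm_le_zero_iff.1 this
  set cc : Fin (d+1) × Fin (e+1) → ℂ := fun x => b x / b x₀ with hcc
  obtain ⟨F, hFcoeff, hFcoeff', hFsupp, hFeval⟩ := mv_package d e cc
  refine ⟨F, ⟨?_, ?_⟩, hFsupp, ?_⟩
  · intro v
    rcases hFcoeff' v with h0 | ⟨x, rfl⟩
    · rw [h0]; norm_num
    · rw [hFcoeff x, hcc]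
      simp only [norm_div]
      rw [div_le_one (norm_pos_iff.2 hβ)]
      exact hx₀ x (Finset.mem_univ x)
  · refine ⟨Finsupp.single 0 (x₀.1:ℕ) + Finsupp.single 1 (x₀.2:ℕ), ?_⟩
    rw [hFcoeff x₀, hcc]
    simp [div_self hβ]
  intro k ζ hζK
  obtain ⟨j, hjt, hζj⟩ := Set.mem_iUnion₂.1 (hcov hζK)
  have hjK : j ∈ K := htK j hjt
  have hcb : Metric.closedBall j δ ⊆ L := by
    rw [hL]; exact Metric.closedBall_subset_cthickening hjK δ
  have hcbΩ : Metric.closedBall j δ ⊆ Ω := hcb.trans hδΩ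
  set H : ℂ → ℂ := fun z => ∑ x : Fin (d+1) × Fin (e+1),
    cc x * (f k z ^ (x.1:ℕ) * g k z ^ (x.2:ℕ)) with hH
  have hHd : DifferentiableOn ℂ H (Metric.closedBall j δ) := by
    apply DifferentiableOn.fun_sum
    intro x _
    exact (differentiableOn_const _).mul
      ((((hf k).mono hcbΩ).pow _).mul (((hg k).mono hcbΩ).pow _))
  set M : ℝ := ((d:ℝ)+1) * ((e:ℝ)+1) * A ^ (d+e) with hM
  have hMb : ∀ z ∈ Metric.closedBall j δ, ‖H z‖ ≤ M := by
    intro z hz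
    have hzL : z ∈ L := hcb hz
    have hterm : ∀ x : Fin (d+1) × Fin (e+1),
        ‖cc x * (f k z ^ (x.1:ℕ) * g k z ^ (x.2:ℕ))‖ ≤ A ^ (d+e) := by
      intro x
      rw [norm_mul, norm_mul, norm_pow, norm_pow]
      have hccx : ‖cc x‖ ≤ 1 := by
        rw [hcc]
        simp only [norm_div]
        rw [div_le_one (norm_pos_iff.2 hβ)]
        exact hx₀ x (Finset.mem_univ x)
      have hfb : ‖f k z‖ ^ (x.1:ℕ) ≤ A ^ d :=
        (pow_le_pow_left₀ (norm_nonneg _) (hAb k z hzL).1 _).trans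
          (pow_le_pow_right₀ hA1 (Fin.is_le _))
      have hgb : ‖g k z‖ ^ (x.2:ℕ) ≤ A ^ e :=
        (pow_le_pow_left₀ (norm_nonneg _) (hAb k z hzL).2 _).trans
          (pow_le_pow_right₀ hA1 (Fin.is_le _))
      calc ‖cc x‖ * (‖f k z‖ ^ (x.1:ℕ) * ‖g k z‖ ^ (x.2:ℕ))
          ≤ 1 * (A ^ d * A ^ e) := by
            refine mul_le_mul hccx (mul_le_mul hfb hgb (by positivity) (by positivity))
              (by positivity) zero_le_one
        _ = A ^ (d+e) := by rw [one_mul, pow_add]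
    calc ‖H z‖ ≤ ∑ x : Fin (d+1) × Fin (e+1),
          ‖cc x * (f k z ^ (x.1:ℕ) * g k z ^ (x.2:ℕ))‖ := norm_sum_le _ _
      _ ≤ ∑ _x : Fin (d+1) × Fin (e+1), A ^ (d+e) :=
          Finset.sum_le_sum fun x _ => hterm x
      _ = M := by
          rw [Finset.sum_const, Finset.card_univ, Fintype.card_prod, Fintype.card_fin,
            Fintype.card_fin, nsmul_eq_mul, hM]
          push_cast
          ring
  have hsphΩ : Metric.sphere j δ ⊆ Ω := Metric.sphere_subset_closedBall.trans hcbΩ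
  have hvan : ∀ i, i < s → (cauchyPowerSeries H j δ i fun _ => 1) = 0 := by
    intro i hi
    have hlin := cauchy_coeff_sum Finset.univ cc
      (fun x z => f k z ^ (x.1:ℕ) * g k z ^ (x.2:ℕ)) j hδpos
      (fun x _ => (((hf k).continuousOn.mono hsphΩ).pow _).mul
        (((hg k).continuousOn.mono hsphΩ).pow _)) i
    have hgoal : (cauchyPowerSeries H j δ i fun _ => 1)
        = ∑ x : Fin (d+1) × Fin (e+1), cc x *
            (cauchyPowerSeries (fun z => f k z ^ (x.1:ℕ) * g k z ^ (x.2:ℕ)) j δ i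
              fun _ => 1) := hlin
    rw [hgoal]
    have hker := hbker (k, ⟨j, hjt⟩, ⟨i, hi⟩)
    calc ∑ x : Fin (d+1) × Fin (e+1), cc x *
            (cauchyPowerSeries (fun z => f k z ^ (x.1:ℕ) * g k z ^ (x.2:ℕ)) j δ i
              fun _ => 1)
        = (∑ x : Fin (d+1) × Fin (e+1), b x *
            (cauchyPowerSeries (fun z => f k z ^ (x.1:ℕ) * g k z ^ (x.2:ℕ)) j δ i
              fun _ => 1)) / b x₀ := by
          rw [Finset.sum_div]
          exact Finset.sum_congr rfl fun x _ => by rw [hcc]; ring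
      _ = 0 := by rw [hker, zero_div]
  have hζj' : ‖ζ - j‖ ≤ δ / 2 := by
    have hd2 : dist ζ j < δ/2 := Metric.mem_ball.1 hζj
    rw [dist_eq_norm] at hd2
    linarith
  have hRpos : 0 < δ.toNNReal := Real.toNNReal_pos.2 hδpos
  have hδnn : ((δ.toNNReal : NNReal) : ℝ) = δ := Real.coe_toNNReal _ hδpos.le
  have htail := tail_bound (R := δ.toNNReal) hRpos
    (by rw [hδnn]; exact hHd) (by rw [hδnn]; exact hMb)
    (by rw [hδnn]; exact hvan) (by rw [hδnn]; exact hζj')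
  have heval : MvPolynomial.eval ![f k ζ, g k ζ] F = H ζ := hFeval _ _
  rw [heval]
  have hM0 : (0:ℝ) ≤ M := by
    rw [hM]; positivity
  have hkey1 : ((1:ℝ)/2) ^ s ≤ 2 * rr ^ ((d * e : ℝ) / N) := by
    have hmod' : N*p*s + (d*e) % (N*p) = d*e := by
      rw [hs]; exact Nat.div_add_mod _ _
    have hmlt : (d*e) % (N*p) < N*p := Nat.mod_lt _ hNp
    have hnat2 : d * e < (N*p) * (s+1) := by
      calc d*e = N*p*s + (d*e) % (N*p) := hmod'.symm
        _ < N*p*s + N*p := Nat.add_lt_add_left hmlt _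
        _ = (N*p)*(s+1) := by ring
    have hde2 : (d * e : ℝ) < ((N:ℝ)*(p:ℝ)) * ((s:ℝ) + 1) := by exact_mod_cast hnat2
    have hNppos : (0:ℝ) < (N:ℝ) * (p:ℝ) := by
      have : (0:ℝ) < (N:ℝ) := by exact_mod_cast hN
      have : (0:ℝ) < (p:ℝ) := by exact_mod_cast hp0
      positivity
    have hsge : (d*e : ℝ) / ((N:ℝ)*(p:ℝ)) - 1 ≤ (s:ℝ) := by
      have h3 : (d*e : ℝ) / ((N:ℝ)*(p:ℝ)) ≤ (s:ℝ) + 1 := by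
        rw [div_le_iff₀ hNppos]
        nlinarith
      linarith
    have h12 : (0:ℝ) < 1/2 := by norm_num
    calc ((1:ℝ)/2)^s = ((1:ℝ)/2) ^ (s:ℝ) := (Real.rpow_natCast _ s).symm
      _ ≤ ((1:ℝ)/2) ^ ((d*e:ℝ)/((N:ℝ)*(p:ℝ)) - 1) :=
          Real.rpow_le_rpow_of_exponent_ge h12 (by norm_num) hsge
      _ = 2 * ((1:ℝ)/2) ^ ((d*e:ℝ)/((N:ℝ)*(p:ℝ))) := by
          rw [Real.rpow_sub h12, Real.rpow_one]
          ring
      _ = 2 * rr ^ ((d*e:ℝ)/N) := by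
          rw [hrr, ← Real.rpow_mul (by norm_num : (0:ℝ) ≤ 1/2)]
          congr 1
          have hN0 : (N:ℝ) ≠ 0 := by
            have : (0:ℝ) < (N:ℝ) := by exact_mod_cast hN
            linarith
          have hp0' : (p:ℝ) ≠ 0 := by
            have : (0:ℝ) < (p:ℝ) := by exact_mod_cast hp0
            linarith
          field_simp
  have hkey2 : 4 * M ≤ (8*A) ^ (d+e) := by
    have h1 : d+1 ≤ 2^d := Nat.lt_two_pow_self
    have h2 : e+1 ≤ 2^e := Nat.lt_two_pow_self
    have hnat : 4 * ((d+1) * (e+1)) ≤ 8 ^ (d+e) := by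
      calc 4 * ((d+1)*(e+1)) ≤ 4 * (2^d * 2^e) :=
            Nat.mul_le_mul_left 4 (Nat.mul_le_mul h1 h2)
        _ = 2^(d+e+2) := by
            rw [← pow_add]
            rw [show d+e+2 = (d+e)+2 from rfl, pow_add]
            ring
        _ ≤ 2^(3*(d+e)) := Nat.pow_le_pow_right (by norm_num) (by omega)
        _ = 8^(d+e) := by
            rw [show (8:ℕ) = 2^3 from rfl, ← pow_mul]
    have hcast : (4:ℝ) * (((d:ℝ)+1) * ((e:ℝ)+1)) ≤ (8:ℝ)^(d+e) := by
      exact_mod_cast hnat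
    calc 4 * M = (4 * (((d:ℝ)+1)*((e:ℝ)+1))) * A^(d+e) := by rw [hM]; ring
      _ ≤ (8:ℝ)^(d+e) * A^(d+e) :=
          mul_le_mul_of_nonneg_right hcast (by positivity)
      _ = (8*A)^(d+e) := (mul_pow _ _ _).symm
  have hrrpos : (0:ℝ) < rr := Real.rpow_pos_of_pos (by norm_num) _
  have hrpos : (0:ℝ) < rr ^ ((d*e:ℝ)/N) := Real.rpow_pos_of_pos hrrpos _
  calc ‖H ζ‖ ≤ 2*M*((1/2:ℝ))^s := htail
    _ ≤ 2*M*(2 * rr^((d*e:ℝ)/N)) :=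
        mul_le_mul_of_nonneg_left hkey1 (by positivity)
    _ = 4*M * rr^((d*e:ℝ)/N) := by ring
    _ ≤ (8*A)^(d+e) * rr^((d*e:ℝ)/N) :=
        mul_le_mul_of_nonneg_right hkey2 hrpos.le
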